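/- Let λ be a 3-adic integer with λ not divisible by 3, and let k ≥ 1. Then among n = 1, 2, ..., 2·3^{k−1}, exactly 2^{k−1} values of n have the property that the first k ternary digits of λ·2^n (i.e., λ·2^n mod 3^k) omit the digit 2. -/

import Mathlib

/-- The `j`-th digit of the 3-adic expansion of `y`. -/
noncomputable def padicDigit (y : ℤ_[3]) (j : ℕ) : ℕ := y.appr (j + 1) / 3 ^ j % 3

theorem emult4 (m : ℕ) : emultiplicity 3 (4^m - 1) = 1 + emultiplicity 3 m := by
  have h := Nat.emultiplicity_pow_sub_pow (p := 3) (by norm_num) ⟨1, by norm_num⟩ (x := 4) (y := 1) (by norm_num) (by norm_num) m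
  simp only [one_pow] at h
  rw [h, show (4 - 1 : ℕ) = 3^1 by norm_num,
    emultiplicity_pow_self_of_prime Nat.prime_three.prime 1]
  norm_num

theorem key (k : ℕ) (hk : 1 ≤ k) (n : ℕ) : 3^k ∣ 2^n - 1 ↔ 2*3^(k-1) ∣ n := by
  rcases Nat.even_or_odd n with he | ho
  · obtain ⟨m, rfl⟩ := he
    rcases Nat.eq_zero_or_pos m with rfl | hm
    · simp
    have h2 : (2:ℕ)^(m+m) - 1 = 4^m - 1 := by rw [show (4:ℕ) = 2^2 by norm_num, ← pow_mul]; ring_nf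
    rw [h2, pow_dvd_iff_le_emultiplicity, emult4, show m + m = 2*m by ring,
      Nat.mul_dvd_mul_iff_left (two_pos), pow_dvd_iff_le_emultiplicity]
    obtain ⟨k', rfl⟩ : ∃ k', k = k' + 1 := ⟨k-1, by omega⟩
    simp only [Nat.add_sub_cancel]
    push_cast
    rw [add_comm (k' : ℕ∞) 1]
    exact ENat.add_le_add_iff_left ENat.one_ne_top
  · constructor
    · intro h
      exfalso
      have h3 : (3:ℕ) ∣ 2^n - 1 := dvd_trans (dvd_pow_self 3 (by omega)) h
      have h1 : (1:ℕ) ≤ 2^n := Nat.one_le_two_pow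
      have : ((2:ZMod 3))^n = 1 := by
        have hc : ((2^n - 1 : ℕ) : ZMod 3) = 0 := by
          exact_mod_cast (ZMod.natCast_eq_zero_iff _ _).2 h3
        push_cast [Nat.cast_sub h1] at hc
        linear_combination hc
      rw [show (2 : ZMod 3) = -1 by decide, ho.neg_one_pow] at this
      exact absurd this (by decide)
    · intro h
      exfalso
      have : (2:ℕ) ∣ n := dvd_trans ⟨3^(k-1), rfl⟩ h
      exact (Nat.not_even_iff_odd.mpr ho) (even_iff_two_dvd.mpr this)

theorem coprime2 (k : ℕ) : Nat.Coprime 2 (3^k) :=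
  (Nat.coprime_primes Nat.prime_two Nat.prime_three |>.mpr (by norm_num)).pow_right _

theorem gpow_eq_one_iff (k : ℕ) (hk : 1 ≤ k) (n : ℕ) :
    (ZMod.unitOfCoprime 2 (coprime2 k))^n = 1 ↔ 2*3^(k-1) ∣ n := by
  haveI : NeZero (3^k) := ⟨pow_ne_zero _ (by norm_num)⟩
  rw [← key k hk n]
  rw [← Units.val_eq_one, Units.val_pow_eq_pow_val, ZMod.coe_unitOfCoprime]
  rw [← Nat.cast_pow, show (1 : ZMod (3^k)) = ((1:ℕ):ZMod (3^k)) by push_cast; ring,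
    ZMod.natCast_eq_natCast_iff]
  exact ⟨fun h => (Nat.modEq_iff_dvd' Nat.one_le_two_pow).mp h.symm,
    fun h => ((Nat.modEq_iff_dvd' Nat.one_le_two_pow).mpr h).symm⟩

theorem order2 (k : ℕ) (hk : 1 ≤ k) :
    orderOf (ZMod.unitOfCoprime 2 (coprime2 k)) = 2*3^(k-1) := by
  refine Nat.dvd_antisymm (orderOf_dvd_of_pow_eq_one ?_) ?_
  · exact (gpow_eq_one_iff k hk _).mpr dvd_rfl
  · exact (gpow_eq_one_iff k hk _).mp (pow_orderOf_eq_one _)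

theorem surj2 (k : ℕ) (hk : 1 ≤ k) (x : (ZMod (3^k))ˣ) :
    ∃ n, 1 ≤ n ∧ n ≤ 2*3^(k-1) ∧ (ZMod.unitOfCoprime 2 (coprime2 k))^n = x := by
  haveI : NeZero (3^k) := ⟨pow_ne_zero _ (by norm_num)⟩
  set N := 2*3^(k-1) with hN
  set g := ZMod.unitOfCoprime 2 (coprime2 k) with hg
  have hcard : Fintype.card (ZMod (3^k))ˣ = N := by
    rw [ZMod.card_units_eq_totient, Nat.totient_prime_pow Nat.prime_three hk]
    ring
  have htop : Subgroup.zpowers g = ⊤ := by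
    apply Subgroup.eq_top_of_card_eq
    rw [Nat.card_zpowers, order2 k hk, Nat.card_eq_fintype_card, hcard]
  have hx : x ∈ Submonoid.powers g := by
    rw [mem_powers_iff_mem_zpowers]
    rw [htop]; trivial
  obtain ⟨m, hm⟩ := hx
  have hNpos : 0 < N := by positivity
  refine ⟨if m % N = 0 then N else m % N, ?_, ?_, ?_⟩
  · split <;> omega
  · split
    · omega
    · exact le_of_lt (Nat.mod_lt _ hNpos)
  · rw [← hm]
    rw [pow_eq_pow_iff_modEq, order2 k hk, ← hN]
    unfold Nat.ModEq
    split <;> simp_all [Nat.mod_self, Nat.mod_mod_of_dvd]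

theorem P_iff (m : ℕ) : (∀ d ∈ Nat.digits 3 m, d = 0 ∨ d = 1) ↔
    ((m % 3 = 0 ∨ m % 3 = 1) ∧ ∀ d ∈ Nat.digits 3 (m / 3), d = 0 ∨ d = 1) := by
  rcases Nat.eq_zero_or_pos m with rfl | hm
  · simp
  · rw [Nat.digits_def' (by norm_num : 1 < 3) hm]
    simp [List.forall_mem_cons]

theorem count1 (k : ℕ) :
    ((Finset.range (3^k)).filter (fun m => ∀ d ∈ Nat.digits 3 m, d = 0 ∨ d = 1)).card = 2^k := by
  induction k with
  | zero => simp [Finset.range_one, Finset.filter_singleton]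
  | succ k ih =>
    rw [show (2:ℕ)^(k+1) = 2^k * 2 by ring, ← ih, ← Finset.card_range 2,
      ← Finset.card_product]
    refine Finset.card_bij' (fun m _ => (m / 3, m % 3)) (fun p _ => 3 * p.1 + p.2)
      ?hi ?hj ?left ?right
    case hi =>
      intro m hm
      simp only [Finset.mem_filter, Finset.mem_range] at hm
      obtain ⟨hlt, hP⟩ := hm
      rw [P_iff] at hP
      simp only [Finset.mem_product, Finset.mem_filter, Finset.mem_range]
      have h3 : (3:ℕ)^(k+1) = 3 * 3^k := by ring
      exact ⟨⟨by omega, hP.2⟩, by omega⟩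
    case hj =>
      intro p hp
      simp only [Finset.mem_product, Finset.mem_filter, Finset.mem_range] at hp
      obtain ⟨⟨hlt, hP⟩, hr⟩ := hp
      simp only [Finset.mem_filter, Finset.mem_range]
      constructor
      · have h3 : (3:ℕ)^(k+1) = 3 * 3^k := by ring
        omega
      · rw [P_iff]
        have h1 : (3 * p.1 + p.2) % 3 = p.2 := by omega
        have h2 : (3 * p.1 + p.2) / 3 = p.1 := by omega
        rw [h1, h2]
        exact ⟨by omega, hP⟩
    case left =>
      intro m hm
      dsimp only
      omega
    case right =>
      intro p hp
      simp only [Finset.mem_product, Finset.mem_filter, Finset.mem_range] at hp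
      have : p = (p.1, p.2) := rfl
      conv_rhs => rw [this]
      simp only [Prod.mk.injEq]
      omega

theorem count2 (k : ℕ) (hk : 1 ≤ k) :
    ((Finset.range (3^k)).filter
      (fun m => ¬ 3 ∣ m ∧ ∀ d ∈ Nat.digits 3 m, d = 0 ∨ d = 1)).card = 2^(k-1) := by
  classical
  have h3 : (3:ℕ)^k = 3 * 3^(k-1) := by
    rw [← pow_succ']; congr 1; omega
  rw [← count1 (k-1)]
  refine Finset.card_bij' (fun m _ => m / 3) (fun q _ => 3 * q + 1) ?hi ?hj ?left ?right
  case hi =>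
    intro m hm
    simp only [Finset.mem_filter, Finset.mem_range] at hm ⊢
    obtain ⟨hlt, hnd, hP⟩ := hm
    rw [P_iff] at hP
    exact ⟨by omega, hP.2⟩
  case hj =>
    intro q hq
    simp only [Finset.mem_filter, Finset.mem_range] at hq ⊢
    obtain ⟨hlt, hP⟩ := hq
    refine ⟨by omega, by omega, ?_⟩
    rw [P_iff]
    have h1 : (3 * q + 1) % 3 = 1 := by omega
    have h2 : (3 * q + 1) / 3 = q := by omega
    rw [h1, h2]
    exact ⟨Or.inr rfl, hP⟩
  case left =>
    intro m hm
    simp only [Finset.mem_filter, Finset.mem_range] at hm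
    obtain ⟨hlt, hnd, hP⟩ := hm
    rw [P_iff] at hP
    have hmod : m % 3 ≠ 0 := fun h => hnd (Nat.dvd_of_mod_eq_zero h)
    omega
  case right =>
    intro q hq
    omega

theorem appr_eq_val (k : ℕ) (y : ℤ_[3]) :
    y.appr k = (PadicInt.toZModPow k y).val := by
  haveI : NeZero ((3:ℕ)^k) := ⟨pow_ne_zero _ (by norm_num)⟩
  have h : PadicInt.toZModPow k y = ((y.appr k : ZMod (3^k))) := rfl
  rw [h, ZMod.val_natCast, Nat.mod_eq_of_lt (PadicInt.appr_lt y k)]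

theorem count_first_k_digits_omit_two (lam : ℤ_[3]) (hlam : ¬ (3 : ℤ_[3]) ∣ lam)
    (k : ℕ) (hk : 1 ≤ k) :
    {n : ℕ | 1 ≤ n ∧ n ≤ 2 * 3 ^ (k - 1) ∧
        ∀ d ∈ Nat.digits 3 ((lam * 2 ^ n).appr k), d = 0 ∨ d = 1}.ncard
      = 2 ^ (k - 1) := by
  classical
  haveI : NeZero ((3:ℕ)^k) := ⟨pow_ne_zero _ (by norm_num)⟩
  set N := 2 * 3 ^ (k-1) with hN
  set g := ZMod.unitOfCoprime 2 (coprime2 k) with hg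
  -- lam is a unit
  have hunit : IsUnit lam := by
    rw [PadicInt.isUnit_iff]
    have h1 := PadicInt.norm_le_one lam
    have h2 : ¬ ‖lam‖ < 1 := fun h => hlam ((PadicInt.norm_lt_one_iff_dvd lam).mp h)
    · push_neg at h2; exact le_antisymm h1 h2
  have humap : IsUnit (PadicInt.toZModPow k lam) := hunit.map _
  set u : (ZMod (3^k))ˣ := humap.unit with hu
  -- key rewrite
  have hrw : ∀ n : ℕ, (lam * 2 ^ n).appr k = ((u * g^n : (ZMod (3^k))ˣ) : ZMod (3^k)).val := by
    intro n
    rw [appr_eq_val]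
    congr 1
    rw [map_mul, map_pow, map_ofNat]
    rw [Units.val_mul, Units.val_pow_eq_pow_val, IsUnit.unit_spec, hg, ZMod.coe_unitOfCoprime]
    norm_num
  -- the set as a finset
  have hset : {n : ℕ | 1 ≤ n ∧ n ≤ N ∧
      ∀ d ∈ Nat.digits 3 ((lam * 2 ^ n).appr k), d = 0 ∨ d = 1} =
      ↑((Finset.Icc 1 N).filter
        (fun n => ∀ d ∈ Nat.digits 3 ((lam * 2 ^ n).appr k), d = 0 ∨ d = 1)) := by
    ext n
    simp only [Finset.coe_filter, Finset.mem_Icc, Set.mem_setOf_eq]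
    tauto
  rw [hset, Set.ncard_coe_finset]
  -- bijection 1 : to units
  have hb1 : ((Finset.Icc 1 N).filter
      (fun n => ∀ d ∈ Nat.digits 3 ((lam * 2 ^ n).appr k), d = 0 ∨ d = 1)).card =
      (Finset.univ.filter
        (fun x : (ZMod (3^k))ˣ =>
          ∀ d ∈ Nat.digits 3 ((x : ZMod (3^k)).val), d = 0 ∨ d = 1)).card := by
    refine Finset.card_bij (fun n _ => u * g^n) ?hi ?inj ?surj
    case hi =>
      intro n hn
      simp only [Finset.mem_filter, Finset.mem_Icc] at hn
      simp only [Finset.mem_filter, Finset.mem_univ, true_and]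
      rw [← hrw]
      exact hn.2
    case inj =>
      intro a ha b hb hab
      simp only [Finset.mem_filter, Finset.mem_Icc] at ha hb
      have hgab : g^a = g^b := by
        have := mul_left_cancel hab
        exact this
      rw [pow_eq_pow_iff_modEq, order2 k hk, ← hN] at hgab
      have hNpos : 0 < N := by positivity
      rcases le_total a b with hab' | hab'
      · have hd : N ∣ b - a := (Nat.modEq_iff_dvd' hab').mp hgab
        rcases Nat.eq_zero_or_pos (b - a) with h0 | h0
        · omega
        · have := Nat.le_of_dvd h0 hd
          omega
      · have hd : N ∣ a - b := (Nat.modEq_iff_dvd' hab').mp hgab.symm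
        rcases Nat.eq_zero_or_pos (a - b) with h0 | h0
        · omega
        · have := Nat.le_of_dvd h0 hd
          omega
    case surj =>
      intro x hx
      simp only [Finset.mem_filter, Finset.mem_univ, true_and] at hx
      obtain ⟨n, hn1, hn2, hn3⟩ := surj2 k hk (u⁻¹ * x)
      refine ⟨n, ?_, ?_⟩
      · simp only [Finset.mem_filter, Finset.mem_Icc]
        refine ⟨⟨hn1, hn2⟩, ?_⟩
        rw [hrw]
        have : u * g ^ n = x := by rw [hg, hn3, mul_inv_cancel_left]
        rw [this]
        exact hx
      · show u * g ^ n = x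
        rw [hg, hn3, mul_inv_cancel_left]
  rw [hb1]
  -- bijection 2 : to naturals
  have hb2 : (Finset.univ.filter
        (fun x : (ZMod (3^k))ˣ =>
          ∀ d ∈ Nat.digits 3 ((x : ZMod (3^k)).val), d = 0 ∨ d = 1)).card =
      ((Finset.range (3^k)).filter
        (fun m => ¬ 3 ∣ m ∧ ∀ d ∈ Nat.digits 3 m, d = 0 ∨ d = 1)).card := by
    refine Finset.card_bij (fun x _ => (x : ZMod (3^k)).val) ?hi ?inj ?surj
    case hi =>
      intro x hx
      simp only [Finset.mem_filter, Finset.mem_univ, true_and] at hx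
      simp only [Finset.mem_filter, Finset.mem_range]
      refine ⟨ZMod.val_lt _, ?_, hx⟩
      intro h3
      have hcop := ZMod.val_coe_unit_coprime x
      have : (3:ℕ) ∣ Nat.gcd ((x : ZMod (3^k)).val) (3^k) :=
        Nat.dvd_gcd h3 (dvd_pow_self 3 (by omega))
      rw [hcop] at this
      omega
    case inj =>
      intro a _ b _ hab
      exact Units.ext (ZMod.val_injective _ hab)
    case surj =>
      intro m hm
      simp only [Finset.mem_filter, Finset.mem_range] at hm
      obtain ⟨hlt, hnd, hP⟩ := hm
      have hcop : Nat.Coprime m (3^k) :=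
        (((Nat.Prime.coprime_iff_not_dvd Nat.prime_three).mpr hnd).pow_left k).symm
      refine ⟨ZMod.unitOfCoprime m hcop, Finset.mem_filter.mpr ⟨Finset.mem_univ _, ?_⟩, ?_⟩
      · rw [ZMod.coe_unitOfCoprime, ZMod.val_natCast, Nat.mod_eq_of_lt hlt]
        exact hP
      · show ((ZMod.unitOfCoprime m hcop : (ZMod (3^k))ˣ) : ZMod (3^k)).val = m
        rw [ZMod.coe_unitOfCoprime, ZMod.val_natCast, Nat.mod_eq_of_lt hlt]
  rw [hb2, count2 k hk]
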